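/- Let H be a non-abelian finite simple group and let φ : H → G be a localization map with G a finite group. Then G is perfect. -/

import Mathlib

open scoped commutatorElement

/-- If `H` is a non-abelian finite simple group and `φ : H → G` is a localization map
with `G` finite, then `G` is perfect. -/
theorem perfect_of_finite_localization_of_simple
    {H : Type*} {G : Type*} [Group H] [Group G] [Finite H] [Finite G]
    [IsSimpleGroup H] (hnab : ∃ a b : H, a * b ≠ b * a) (φ : H →* G)
    (hloc : ∀ ψ : H →* G, ∃! χ : G →* G, χ.comp φ = ψ) :
    commutator G = ⊤ := by
  by_contra hne
  -- `H` is perfect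
  have hHperf : commutator H = ⊤ := by
    rcases (Subgroup.commutator_normal (⊤ : Subgroup H) ⊤).eq_bot_or_eq_top with h | h
    · exfalso
      obtain ⟨a, b, hab⟩ := hnab
      have hmem : ⁅a, b⁆ ∈ commutator H :=
        Subgroup.commutator_mem_commutator (Subgroup.mem_top a) (Subgroup.mem_top b)
      rw [commutator, h, Subgroup.mem_bot] at hmem
      exact hab (commutatorElement_eq_one_iff_mul_comm.mp hmem)
    · exact h
  -- `φ` maps into the commutator subgroup of `G`
  have hφmem : ∀ h : H, φ h ∈ commutator G := by
    intro h
    have h1 : φ h ∈ Subgroup.map φ (commutator H) :=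
      ⟨h, by rw [hHperf]; trivial, rfl⟩
    have h2 : Subgroup.map φ (commutator H) ≤ commutator G := by
      rw [commutator, Subgroup.map_commutator]
      exact Subgroup.commutator_mono le_top le_top
    exact h2 h1
  -- pick a maximal proper subgroup `M` containing the commutator subgroup
  haveI : Finite (Subgroup G) :=
    Finite.of_injective (fun K : Subgroup G => (K : Set G)) SetLike.coe_injective
  obtain ⟨M, hM, hle⟩ := (eq_top_or_exists_le_coatom (commutator G)).resolve_left hne
  haveI hMnormal : M.Normal := by
    constructor
    intro n hn g
    have h1 : ⁅g, n⁆ ∈ M :=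
      hle (Subgroup.commutator_mem_commutator (Subgroup.mem_top g) (Subgroup.mem_top n))
    have h2 : g * n * g⁻¹ = ⁅g, n⁆ * n := by
      rw [commutatorElement_def]; group
    rw [h2]
    exact M.mul_mem h1 hn
  -- the quotient `Q` is a nontrivial finite simple abelian group
  set Q := G ⧸ M with hQ
  haveI : Nontrivial Q := by
    obtain ⟨x, hx⟩ : ∃ x : G, x ∉ M := by
      by_contra hall
      push_neg at hall
      exact hM.1 ((Subgroup.eq_top_iff' M).mpr hall)
    exact ⟨QuotientGroup.mk x, 1, fun hxy => hx ((QuotientGroup.eq_one_iff x).mp hxy)⟩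
  have hcomm : ∀ a b : Q, a * b = b * a := by
    intro a b
    induction a using QuotientGroup.induction_on with
    | H x =>
      induction b using QuotientGroup.induction_on with
      | H y =>
        show QuotientGroup.mk (x * y) = QuotientGroup.mk (y * x)
        rw [QuotientGroup.eq]
        have : (x * y)⁻¹ * (y * x) = ⁅y⁻¹, x⁻¹⁆ := by
          rw [commutatorElement_def]; group
        rw [this]
        exact hle (Subgroup.commutator_mem_commutator (Subgroup.mem_top _) (Subgroup.mem_top _))
  letI cg : CommGroup Q := { (inferInstance : Group Q) with mul_comm := hcomm }
  haveI hsimple : IsSimpleGroup Q := by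
    constructor
    intro K _
    have hsurj : Function.Surjective (QuotientGroup.mk' M) := QuotientGroup.mk'_surjective M
    have hMle : M ≤ Subgroup.comap (QuotientGroup.mk' M) K := by
      intro x hx
      have hx1 : QuotientGroup.mk' M x = 1 := (QuotientGroup.eq_one_iff x).mpr hx
      simpa [Subgroup.mem_comap, hx1] using K.one_mem
    rcases eq_or_lt_of_le hMle with heq | hlt
    · left
      have h : Subgroup.comap (QuotientGroup.mk' M) K =
          Subgroup.comap (QuotientGroup.mk' M) ⊥ := by
        rw [← heq, MonoidHom.comap_bot, QuotientGroup.ker_mk']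
      exact Subgroup.comap_injective hsurj h
    · right
      have htop := hM.2 _ hlt
      have h : Subgroup.comap (QuotientGroup.mk' M) K =
          Subgroup.comap (QuotientGroup.mk' M) ⊤ := by
        rw [htop, Subgroup.comap_top]
      exact Subgroup.comap_injective hsurj h
  -- `Q` is cyclic of prime order `p`
  haveI : Finite Q := Quotient.finite _
  haveI hcyc : IsCyclic Q := @IsSimpleGroup.isCyclic Q cg hsimple
  have hp : (Nat.card Q).Prime := @IsSimpleGroup.prime_card Q cg hsimple
  haveI : Fact (Nat.card Q).Prime := ⟨hp⟩
  -- Cauchy: `G` has an element of order `p`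
  have hdvd : Nat.card Q ∣ Nat.card G := Subgroup.card_quotient_dvd_card M
  obtain ⟨g, hg⟩ := exists_prime_orderOf_dvd_card' (Nat.card Q) hdvd
  -- the subgroup generated by `g` is cyclic of the same prime order, so `Q ≃* zpowers g`
  have hcardZ : Nat.card (Subgroup.zpowers g) = Nat.card Q := by
    rw [Nat.card_zpowers, hg]
  haveI : IsCyclic (Subgroup.zpowers g) := isCyclic_of_prime_card hcardZ
  let e : Q ≃* Subgroup.zpowers g := mulEquivOfCyclicCardEq hcardZ.symm
  let θ : Q →* G := (Subgroup.zpowers g).subtype.comp e.toMonoidHom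
  have hθinj : Function.Injective θ :=
    (Subgroup.subtype_injective _).comp e.injective
  let χ₁ : G →* G := θ.comp (QuotientGroup.mk' M)
  -- `χ₁` kills `φ`, as does the trivial homomorphism; by uniqueness `χ₁ = 1`
  have hχ₁φ : χ₁.comp φ = 1 := by
    ext h
    have hmk : QuotientGroup.mk' M (φ h) = 1 :=
      (QuotientGroup.eq_one_iff (φ h)).mpr (hle (hφmem h))
    show θ (QuotientGroup.mk' M (φ h)) = 1
    rw [hmk, map_one]
  obtain ⟨χ, -, huniq⟩ := hloc 1
  have h1 : χ₁ = 1 := (huniq χ₁ hχ₁φ).trans (huniq 1 (MonoidHom.one_comp φ)).symm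
  -- but `χ₁` is nontrivial, contradiction
  obtain ⟨q, hq⟩ := exists_ne (1 : Q)
  obtain ⟨x, hx⟩ := QuotientGroup.mk'_surjective M q
  have : χ₁ x = θ q := by show θ (QuotientGroup.mk' M x) = θ q; rw [hx]
  rw [h1] at this
  have : θ q = θ 1 := by rw [map_one]; exact this.symm
  exact hq (hθinj this)
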